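/- Consider any two finite simple graphs G' = (V, E'), G'' = (V, E'') on the same vertex set V, weight functions w' : E' → [0, 1], w'' : E'' → [0, 1], and a real number α with 0 ≤ α < 2/3, such that dist_V(w', w'') ≤ α·size(w''). Then there exists a weight function w̃ : E' → [0, 1] satisfying: (1) w̃(e) ≤ w'(e) for every edge e ∈ E'; (2) w̃(v) ≤ w''(v) for every vertex v ∈ V; (3) size(w'') ≤ (1 − 3α/2)^{−1}·size(w̃). -/
import Mathlib


open Finset

namespace Stmt8

variable {V : Type*}

/-- Total size of a weight function on the edges of `G`. -/
noncomputable def size (G : SimpleGraph V) [Fintype V] [DecidableEq V] [DecidableRel G.Adj]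
    (w : Sym2 V → ℝ) : ℝ :=
  ∑ e ∈ G.edgeFinset, w e

/-- Total weight received by a vertex `v` from the edges of `G` incident on it. -/
noncomputable def vertexWeight (G : SimpleGraph V) [Fintype V] [DecidableEq V]
    [DecidableRel G.Adj] (w : Sym2 V → ℝ) (v : V) : ℝ :=
  ∑ e ∈ G.edgeFinset.filter (fun e => v ∈ e), w e

/-- The distance `dist_V(w₁, w₂) = ∑_{v ∈ V} |w₁(v) - w₂(v)|` between two weight
functions defined on graphs sharing the vertex set `V`. -/
noncomputable def distV (G₁ G₂ : SimpleGraph V) [Fintype V] [DecidableEq V]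
    [DecidableRel G₁.Adj] [DecidableRel G₂.Adj] (w₁ w₂ : Sym2 V → ℝ) : ℝ :=
  ∑ v : V, |vertexWeight G₁ w₁ v - vertexWeight G₂ w₂ v|

/-- Product of a vertex function over the two endpoints of an edge. -/
noncomputable def pairMul (f : V → ℝ) : Sym2 V → ℝ :=
  Sym2.lift ⟨fun a b => f a * f b, fun a b => by ring⟩

/-- Sum of a vertex function over the two endpoints of an edge. -/
noncomputable def pairAdd (f : V → ℝ) : Sym2 V → ℝ :=
  Sym2.lift ⟨fun a b => f a + f b, fun a b => by ring⟩

lemma sum_mem_eq_pairAdd [Fintype V] [DecidableEq V] {e : Sym2 V} (hd : ¬ e.IsDiag)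
    (g : V → ℝ) : ∑ v ∈ univ.filter (fun v => v ∈ e), g v = pairAdd g e := by
  induction e using Sym2.ind with
  | _ a b =>
    have hab : a ≠ b := by
      intro h; exact hd (by simp [h, Sym2.isDiag_iff_proj_eq])
    have hset : univ.filter (fun v => v ∈ s(a, b)) = {a, b} := by
      ext v; simp [Sym2.mem_iff]
    rw [hset, Finset.sum_pair hab]
    simp [pairAdd]

lemma sum_vertexWeight_mul (G : SimpleGraph V) [Fintype V] [DecidableEq V]
    [DecidableRel G.Adj] (w : Sym2 V → ℝ) (g : V → ℝ) :
    ∑ v : V, g v * vertexWeight G w v = ∑ e ∈ G.edgeFinset, pairAdd g e * w e := by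
  unfold vertexWeight
  simp_rw [Finset.mul_sum, Finset.sum_filter]
  rw [Finset.sum_comm]
  refine Finset.sum_congr rfl fun e he => ?_
  have hd : ¬ e.IsDiag := by
    rw [SimpleGraph.mem_edgeFinset] at he
    exact G.not_isDiag_of_mem_edgeSet he
  rw [← Finset.sum_filter, ← Finset.sum_mul, sum_mem_eq_pairAdd hd]

lemma sum_vertexWeight (G : SimpleGraph V) [Fintype V] [DecidableEq V]
    [DecidableRel G.Adj] (w : Sym2 V → ℝ) :
    ∑ v : V, vertexWeight G w v = 2 * size G w := by
  have h := sum_vertexWeight_mul G w (fun _ => 1)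
  have h2 : ∀ e : Sym2 V, pairAdd (fun _ : V => (1:ℝ)) e = 2 := by
    intro e; induction e using Sym2.ind with
    | _ a b => simp [pairAdd]; norm_num
  simp only [one_mul, h2] at h
  rw [h, size, Finset.mul_sum]

lemma pairMul_nonneg {f : V → ℝ} (hf : ∀ v, 0 ≤ f v) (e : Sym2 V) : 0 ≤ pairMul f e := by
  induction e using Sym2.ind with
  | _ a b => exact mul_nonneg (hf a) (hf b)

lemma pairMul_le_one {f : V → ℝ} (hf0 : ∀ v, 0 ≤ f v) (hf1 : ∀ v, f v ≤ 1) (e : Sym2 V) :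
    pairMul f e ≤ 1 := by
  induction e using Sym2.ind with
  | _ a b => exact mul_le_one₀ (hf1 a) (hf0 b) (hf1 b)

lemma pairMul_le_of_mem {f : V → ℝ} (hf0 : ∀ v, 0 ≤ f v) (hf1 : ∀ v, f v ≤ 1)
    {v : V} {e : Sym2 V} (hv : v ∈ e) : pairMul f e ≤ f v := by
  induction e using Sym2.ind with
  | _ a b =>
    rcases Sym2.mem_iff.mp hv with h | h <;> subst h
    · calc f v * f b ≤ f v * 1 := mul_le_mul_of_nonneg_left (hf1 b) (hf0 v)
        _ = f v := mul_one _
    · calc f a * f v ≤ 1 * f v := mul_le_mul_of_nonneg_right (hf1 a) (hf0 v)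
        _ = f v := one_mul _

lemma one_sub_pairAdd_le_pairMul {f : V → ℝ} (hf0 : ∀ v, 0 ≤ f v) (hf1 : ∀ v, f v ≤ 1)
    (e : Sym2 V) : 1 - pairAdd (fun v => 1 - f v) e ≤ pairMul f e := by
  induction e using Sym2.ind with
  | _ a b =>
    have := mul_nonneg (sub_nonneg.mpr (hf1 a)) (sub_nonneg.mpr (hf1 b))
    simp only [pairAdd, pairMul, Sym2.lift_mk]
    nlinarith

/-- If `dist_V(w₁, w₂) ≤ α·size(w₂)` for some `0 ≤ α < 2/3`, then there exists a
weight function `w̃ : E₁ → [0,1]` with (1) `w̃(e) ≤ w₁(e)` on every edge of `G₁`,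
(2) `w̃(v) ≤ w₂(v)` at every vertex, and (3) `size(w₂) ≤ (1 - 3α/2)⁻¹ · size(w̃)`. -/
theorem exists_scaled_weight (G₁ G₂ : SimpleGraph V) [Fintype V] [DecidableEq V]
    [DecidableRel G₁.Adj] [DecidableRel G₂.Adj]
    (w₁ w₂ : Sym2 V → ℝ)
    (hw₁ : ∀ e ∈ G₁.edgeFinset, 0 ≤ w₁ e ∧ w₁ e ≤ 1)
    (hw₂ : ∀ e ∈ G₂.edgeFinset, 0 ≤ w₂ e ∧ w₂ e ≤ 1)
    (α : ℝ) (hα0 : 0 ≤ α) (hα : α < 2 / 3)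
    (hdist : distV G₁ G₂ w₁ w₂ ≤ α * size G₂ w₂) :
    ∃ wt : Sym2 V → ℝ,
      (∀ e ∈ G₁.edgeFinset, 0 ≤ wt e ∧ wt e ≤ 1) ∧
      (∀ e ∈ G₁.edgeFinset, wt e ≤ w₁ e) ∧
      (∀ v : V, vertexWeight G₁ wt v ≤ vertexWeight G₂ w₂ v) ∧
      size G₂ w₂ ≤ (1 - 3 * α / 2)⁻¹ * size G₁ wt := by
  set W₁ := vertexWeight G₁ w₁ with hW₁def
  set W₂ := vertexWeight G₂ w₂ with hW₂def
  have hW₁0 : ∀ v, 0 ≤ W₁ v := fun v =>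
    Finset.sum_nonneg fun e he => (hw₁ e (Finset.mem_of_mem_filter e he)).1
  have hW₂0 : ∀ v, 0 ≤ W₂ v := fun v =>
    Finset.sum_nonneg fun e he => (hw₂ e (Finset.mem_of_mem_filter e he)).1
  set c : V → ℝ := fun v => min 1 (W₂ v / W₁ v) with hcdef
  have hc0 : ∀ v, 0 ≤ c v := fun v =>
    le_min zero_le_one (div_nonneg (hW₂0 v) (hW₁0 v))
  have hc1 : ∀ v, c v ≤ 1 := fun v => min_le_left _ _
  have hcW : ∀ v, c v * W₁ v ≤ W₂ v := by
    intro v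
    rcases eq_or_lt_of_le (hW₁0 v) with h | h
    · rw [← h, mul_zero]; exact hW₂0 v
    · calc c v * W₁ v ≤ (W₂ v / W₁ v) * W₁ v :=
          mul_le_mul_of_nonneg_right (min_le_right _ _) h.le
        _ = W₂ v := div_mul_cancel₀ _ (ne_of_gt h)
  have hloss : ∀ v, (1 - c v) * W₁ v ≤ |W₁ v - W₂ v| := by
    intro v
    rcases eq_or_lt_of_le (hW₁0 v) with h | h
    · rw [← h, mul_zero]; exact abs_nonneg _
    · rcases le_or_gt (W₁ v) (W₂ v) with hle | hlt
      · have : c v = 1 := min_eq_left ((one_le_div h).mpr hle)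
        rw [this]; simpa using abs_nonneg (W₁ v - W₂ v)
      · have hc : c v = W₂ v / W₁ v := min_eq_right ((div_lt_one h).mpr hlt).le
        have : (1 - W₂ v / W₁ v) * W₁ v = W₁ v - W₂ v := by
          field_simp
        rw [hc, this]; exact le_abs_self _
  refine ⟨fun e => w₁ e * pairMul c e, ?_, ?_, ?_, ?_⟩
  · intro e he
    refine ⟨mul_nonneg (hw₁ e he).1 (pairMul_nonneg hc0 e), ?_⟩
    calc w₁ e * pairMul c e ≤ 1 * 1 :=
        mul_le_mul (hw₁ e he).2 (pairMul_le_one hc0 hc1 e)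
          (pairMul_nonneg hc0 e) zero_le_one
      _ = 1 := one_mul 1
  · intro e he
    exact mul_le_of_le_one_right (hw₁ e he).1 (pairMul_le_one hc0 hc1 e)
  · intro v
    calc vertexWeight G₁ (fun e => w₁ e * pairMul c e) v
        ≤ ∑ e ∈ G₁.edgeFinset.filter (fun e => v ∈ e), w₁ e * c v := by
          refine Finset.sum_le_sum fun e he => ?_
          have hv : v ∈ e := (Finset.mem_filter.mp he).2
          exact mul_le_mul_of_nonneg_left (pairMul_le_of_mem hc0 hc1 hv)
            (hw₁ e (Finset.mem_of_mem_filter e he)).1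
      _ = c v * W₁ v := by
          rw [← Finset.sum_mul, mul_comm]; rfl
      _ ≤ W₂ v := hcW v
  · -- size bound
    have hA : ∑ e ∈ G₁.edgeFinset, (w₁ e - pairAdd (fun v => 1 - c v) e * w₁ e)
        ≤ size G₁ (fun e => w₁ e * pairMul c e) := by
      refine Finset.sum_le_sum fun e he => ?_
      have h1 := one_sub_pairAdd_le_pairMul hc0 hc1 e
      have h0 := (hw₁ e he).1
      nlinarith [mul_le_mul_of_nonneg_left h1 h0]
    have hB : ∑ v : V, (1 - c v) * W₁ v
        = ∑ e ∈ G₁.edgeFinset, pairAdd (fun v => 1 - c v) e * w₁ e :=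
      sum_vertexWeight_mul G₁ w₁ (fun v => 1 - c v)
    have hAB : size G₁ w₁ - ∑ v : V, (1 - c v) * W₁ v
        ≤ size G₁ (fun e => w₁ e * pairMul c e) := by
      rw [hB]
      calc size G₁ w₁ - ∑ e ∈ G₁.edgeFinset, pairAdd (fun v => 1 - c v) e * w₁ e
          = ∑ e ∈ G₁.edgeFinset, (w₁ e - pairAdd (fun v => 1 - c v) e * w₁ e) := by
            rw [Finset.sum_sub_distrib]; rfl
        _ ≤ _ := hA
    have hL : ∑ v : V, (1 - c v) * W₁ v ≤ distV G₁ G₂ w₁ w₂ :=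
      Finset.sum_le_sum fun v _ => hloss v
    have hC : 2 * size G₂ w₂ - distV G₁ G₂ w₁ w₂ ≤ 2 * size G₁ w₁ := by
      rw [← sum_vertexWeight G₁ w₁, ← sum_vertexWeight G₂ w₂]
      unfold distV
      rw [← Finset.sum_sub_distrib]
      refine Finset.sum_le_sum fun v _ => ?_
      have := le_abs_self (W₁ v - W₂ v)
      have := neg_abs_le (W₁ v - W₂ v)
      simp only [← hW₁def, ← hW₂def]
      linarith
    have hpos : (0:ℝ) < 1 - 3 * α / 2 := by linarith
    have hkey : (1 - 3 * α / 2) * size G₂ w₂ ≤ size G₁ (fun e => w₁ e * pairMul c e) := by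
      nlinarith [hdist, hAB, hL, hC]
    calc size G₂ w₂ = (1 - 3 * α / 2)⁻¹ * ((1 - 3 * α / 2) * size G₂ w₂) := by
          rw [← mul_assoc, inv_mul_cancel₀ (ne_of_gt hpos), one_mul]
      _ ≤ (1 - 3 * α / 2)⁻¹ * size G₁ (fun e => w₁ e * pairMul c e) :=
          mul_le_mul_of_nonneg_left hkey (inv_nonneg.mpr hpos.le)

end Stmt8
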